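/- Let θ be a ternary relation on ℕ, X ⊆ ℕ a finite set, n ∈ ℕ and a ≤ min X. If X is ω^{n+1}·a-large*(θ) and exp-sparse, then for every coloring f : X → {0,…,a−1} there is an f-homogeneous ω^n-large*(θ) subset of X (f-homogeneous means f is constant on the subset). -/

import Mathlib

/-- The minimum of a finite set of naturals (`0` if empty). -/
noncomputable def minN (X : Finset ℕ) : ℕ := sInf (X : Set ℕ)

/-- The maximum of a finite set of naturals (`0` if empty). -/
def maxN (X : Finset ℕ) : ℕ := X.sup id

/-- `E` lies entirely below `F`. -/
def SetBelow (E F : Finset ℕ) : Prop := ∀ x ∈ E, ∀ y ∈ F, x < y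

/-- `E` and `F` are `θ`-apart: for every `x < max E` there is `y < min F`
with `θ x y z` for all `z < max F`. -/
def ThetaApart (θ : ℕ → ℕ → ℕ → Prop) (E F : Finset ℕ) : Prop :=
  ∀ x < maxN E, ∃ y < minN F, ∀ z < maxN F, θ x y z

/-- `L·k`: finite sets containing `k` pairwise `θ`-apart members `X₀ < ⋯ < X_{k-1}` of `L`. -/
def MulK (θ : ℕ → ℕ → ℕ → Prop) (L : Set (Finset ℕ)) (k : ℕ) : Set (Finset ℕ) :=
  {F | ∃ X : Fin k → Finset ℕ, (∀ i, X i ∈ L) ∧ (∀ i, X i ⊆ F) ∧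
    ∀ i j, i < j → SetBelow (X i) (X j) ∧ ThetaApart θ (X i) (X j)}

/-- `L·σ` for a finite sequence `σ`: `L·ε = L`, `L·(k⌢τ) = (L·k)·τ`. -/
def MulSeq (θ : ℕ → ℕ → ℕ → Prop) (L : Set (Finset ℕ)) : List ℕ → Set (Finset ℕ)
  | [] => L
  | k :: τ => MulSeq θ (MulK θ L k) τ

/-- `L^θ_n`: the `ω^n`-large*(θ) finite sets. -/
noncomputable def LargeStar (θ : ℕ → ℕ → ℕ → Prop) : ℕ → Set (Finset ℕ)
  | 0 => {X | X.Nonempty}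
  | n + 1 => {X | X.Nonempty ∧
      X.erase (minN X) ∈ MulSeq θ (LargeStar θ n) (List.replicate (n + 1) (minN X))}

/-- `ω^n`-largeness(θ) (the non-starred notion). -/
noncomputable def LargeTheta (θ : ℕ → ℕ → ℕ → Prop) : ℕ → Set (Finset ℕ)
  | 0 => {X | X.Nonempty}
  | n + 1 => {X | X.Nonempty ∧ X.erase (minN X) ∈ MulK θ (LargeTheta θ n) (minN X)}

/-- `L·k` without θ-apartness (plain largeness product). -/
def MulKPlain (L : Set (Finset ℕ)) (k : ℕ) : Set (Finset ℕ) :=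
  {F | ∃ X : Fin k → Finset ℕ, (∀ i, X i ∈ L) ∧ (∀ i, X i ⊆ F) ∧
    ∀ i j, i < j → SetBelow (X i) (X j)}

/-- Ketonen–Solovay `ω^n`-largeness (no θ). -/
noncomputable def LargePlain : ℕ → Set (Finset ℕ)
  | 0 => {X | X.Nonempty}
  | n + 1 => {X | X.Nonempty ∧ X.erase (minN X) ∈ MulKPlain (LargePlain n) (minN X)}

/-- `g`-sparsity. -/
def GSparse (g : ℕ → ℕ) (X : Finset ℕ) : Prop := ∀ x ∈ X, ∀ y ∈ X, x < y → g x < y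

/-- exp-sparsity. -/
def ExpSparse (X : Finset ℕ) : Prop := ∀ x ∈ X, ∀ y ∈ X, x < y → 4 ^ x < y

/-- `ω^k`-sparsity. -/
def OmegaSparse (k : ℕ) (X : Finset ℕ) : Prop :=
  ∀ x ∈ X, ∀ y ∈ X, x < y → Finset.Ioc x y ∈ LargePlain k

section AuxLemmas

variable {θ : ℕ → ℕ → ℕ → Prop} {L L' : Set (Finset ℕ)}

lemma minN_le {X : Finset ℕ} {x : ℕ} (hx : x ∈ X) : minN X ≤ x :=
  Nat.sInf_le (Finset.mem_coe.2 hx)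

lemma minN_mem {X : Finset ℕ} (h : X.Nonempty) : minN X ∈ X := by
  obtain ⟨x, hx⟩ := h
  exact Finset.mem_coe.1 (Nat.sInf_mem ⟨x, Finset.mem_coe.2 hx⟩)

lemma nonempty_of_minN {X : Finset ℕ} (h : 3 ≤ minN X) : X.Nonempty := by
  rcases X.eq_empty_or_nonempty with he | hne
  · subst he
    simp only [minN, Finset.coe_empty, Nat.sInf_empty] at h
    omega
  · exact hne

lemma maxN_mono {E F : Finset ℕ} (h : E ⊆ F) : maxN E ≤ maxN F :=
  Finset.sup_mono h

lemma minN_mono {E F : Finset ℕ} (h : E ⊆ F) (hE : E.Nonempty) : minN F ≤ minN E :=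
  minN_le (h (minN_mem hE))

lemma minN_eq_of {Y : Finset ℕ} {y : ℕ} (hy : y ∈ Y) (h : ∀ w ∈ Y, y ≤ w) : minN Y = y :=
  le_antisymm (minN_le hy) (h _ (minN_mem ⟨y, hy⟩))

lemma setBelow_mono {E E' F F' : Finset ℕ} (hE : E' ⊆ E) (hF : F' ⊆ F)
    (h : SetBelow E F) : SetBelow E' F' :=
  fun x hx y hy => h x (hE hx) y (hF hy)

lemma thetaApart_mono {E E' F F' : Finset ℕ} (hE : E' ⊆ E) (hF : F' ⊆ F)
    (hF' : F'.Nonempty) (h : ThetaApart θ E F) : ThetaApart θ E' F' := by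
  intro x hx
  obtain ⟨y, hy, hz⟩ := h x (hx.trans_le (maxN_mono hE))
  exact ⟨y, hy.trans_le (minN_mono hF hF'), fun z hzlt => hz z (hzlt.trans_le (maxN_mono hF))⟩

lemma mulK_mono_left (h : L ⊆ L') (k : ℕ) : MulK θ L k ⊆ MulK θ L' k := by
  rintro F ⟨W, h1, h2, h3⟩
  exact ⟨W, fun i => h (h1 i), h2, h3⟩

lemma mulK_anti {k k' : ℕ} (h : k' ≤ k) : MulK θ L k ⊆ MulK θ L k' := by
  rintro F ⟨W, h1, h2, h3⟩
  refine ⟨fun i => W (Fin.castLE h i), fun i => h1 _, fun i => h2 _, fun i j hij => h3 _ _ ?_⟩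
  exact hij

lemma mulSeq_nil : MulSeq θ L [] = L := rfl

lemma mulSeq_cons (k : ℕ) (τ : List ℕ) : MulSeq θ L (k :: τ) = MulSeq θ (MulK θ L k) τ := rfl

lemma mulSeq_mono_left : ∀ (σ : List ℕ) {L L' : Set (Finset ℕ)}, L ⊆ L' →
    MulSeq θ L σ ⊆ MulSeq θ L' σ
  | [], _, _, h => h
  | k :: τ, _, _, h => mulSeq_mono_left τ (mulK_mono_left h k)

lemma mulSeq_append (σ τ : List ℕ) :
    ∀ L : Set (Finset ℕ), MulSeq θ L (σ ++ τ) = MulSeq θ (MulSeq θ L σ) τ := by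
  induction σ with
  | nil => intro L; rfl
  | cons k σ ih => intro L; simpa [mulSeq_cons] using ih (MulK θ L k)

lemma mulSeq_replicate_succ (L : Set (Finset ℕ)) (j k : ℕ) :
    MulSeq θ L (List.replicate (j + 1) k) = MulK θ (MulSeq θ L (List.replicate j k)) k := by
  rw [List.replicate_succ', mulSeq_append]
  rfl

lemma mulSeq_replicate_anti {y k : ℕ} (h : y ≤ k) :
    ∀ j, MulSeq θ L (List.replicate j k) ⊆ MulSeq θ L (List.replicate j y)
  | 0 => subset_rfl
  | j + 1 => by
    rw [mulSeq_replicate_succ, mulSeq_replicate_succ]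
    exact fun F hF => mulK_anti h (mulK_mono_left (mulSeq_replicate_anti h j) k hF)

lemma largeStar_nonempty : ∀ {n : ℕ} {Y : Finset ℕ}, Y ∈ LargeStar θ n → Y.Nonempty
  | 0, _, h => h
  | _ + 1, _, h => h.1

lemma largeStar_succ (θ : ℕ → ℕ → ℕ → Prop) (n : ℕ) (X : Finset ℕ) :
    X ∈ LargeStar θ (n + 1) ↔ X.Nonempty ∧
      X.erase (minN X) ∈ MulSeq θ (LargeStar θ n) (List.replicate (n + 1) (minN X)) :=
  Iff.rfl

lemma mulSeq_replicate_nonempty {k : ℕ} (hL : ∀ Y ∈ L, Finset.Nonempty Y) (hk : 0 < k) :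
    ∀ j {F : Finset ℕ}, F ∈ MulSeq θ L (List.replicate j k) → F.Nonempty
  | 0, F, h => hL F h
  | j + 1, F, h => by
    rw [mulSeq_replicate_succ] at h
    obtain ⟨W, h1, h2, _⟩ := h
    obtain ⟨x, hx⟩ := mulSeq_replicate_nonempty hL hk j (h1 ⟨0, hk⟩)
    exact ⟨x, h2 _ hx⟩

lemma sq_lt_four_pow (x : ℕ) : x * x < 4 ^ x := by
  have h : x < 2 ^ x := Nat.lt_two_pow_self
  calc x * x < 2 ^ x * 2 ^ x := Nat.mul_lt_mul'' h h
    _ = 4 ^ x := by rw [← pow_add, ← two_mul, pow_mul]; norm_num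

lemma pigeon {m a k : ℕ} (ha : 0 < a) (hk : a * k ≤ m) (g : Fin m → ℕ)
    (hg : ∀ i, g i < a) :
    ∃ c < a, k ≤ (Finset.univ.filter (fun i => g i = c)).card := by
  rcases Nat.eq_zero_or_pos k with rfl | hkpos
  · exact ⟨0, ha, Nat.zero_le _⟩
  by_contra h
  push_neg at h
  have hsum : ∑ c ∈ Finset.range a, (Finset.univ.filter (fun i => g i = c)).card = m := by
    rw [← Finset.card_eq_sum_card_fiberwise (fun i _ => Finset.mem_range.2 (hg i))]
    simp
  have hle : ∑ c ∈ Finset.range a, (Finset.univ.filter (fun i => g i = c)).card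
      ≤ (Finset.range a).card • (k - 1) := by
    refine Finset.sum_le_card_nsmul _ _ _ (fun c hc => ?_)
    have := h c (Finset.mem_range.1 hc)
    omega
  rw [Finset.card_range, smul_eq_mul] at hle
  have h2 : a * k ≤ a * (k - 1) := hk.trans (hsum ▸ hle)
  have h3 := Nat.le_of_mul_le_mul_left h2 ha
  omega

end AuxLemmas

lemma stmt10_aux (θ : ℕ → ℕ → ℕ → Prop) :
    ∀ n a (X : Finset ℕ) (f : ℕ → ℕ), 3 ≤ minN X → a ≤ minN X →
      X ∈ MulK θ (LargeStar θ (n + 1)) a → ExpSparse X → (∀ x ∈ X, f x < a) →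
      ∃ Y ⊆ X, Y ∈ LargeStar θ n ∧ ∀ x ∈ Y, ∀ y ∈ Y, f x = f y := by
  intro n
  induction n with
  | zero =>
    intro a X f h3 _ _ _ _
    have hne := nonempty_of_minN h3
    exact ⟨{minN X}, Finset.singleton_subset_iff.2 (minN_mem hne),
      Finset.singleton_nonempty _, by simp⟩
  | succ n ihn =>
    intro a
    induction a with
    | zero =>
      intro X f h3 _ _ _ hf
      exact absurd (hf _ (minN_mem (nonempty_of_minN h3))) (by omega)
    | succ a' iha =>
      intro X f h3 ha hX hsp hf
      obtain ⟨Xw, hXwL, hXwsub, hXwpair⟩ := hX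
      set Xl := Xw (Fin.last a') with hXl
      have hXlne : Xl.Nonempty := largeStar_nonempty (hXwL _)
      set m := minN Xl with hm
      have hmXl : m ∈ Xl := minN_mem hXlne
      have hmX : m ∈ X := hXwsub _ hmXl
      have hmA : a' + 1 ≤ m := ha.trans (minN_le hmX)
      set k := m / (a' + 1) with hkdef
      have hk1 : 0 < k := (Nat.one_le_div_iff (by omega)).2 hmA
      have hLne : ∀ Y ∈ LargeStar θ n, Finset.Nonempty Y := fun _ h => largeStar_nonempty h
      -- key tree-extraction claim
      have key : ∀ j (R : Finset ℕ), R ⊆ X →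
          R ∈ MulSeq θ (LargeStar θ (n + 1)) (List.replicate (j + 1) m) →
          ∃ c < a' + 1, ∃ Z ⊆ R, Z ∈ MulSeq θ (LargeStar θ n) (List.replicate j k) ∧
            ∀ z ∈ Z, f z = c := by
        intro j
        induction j with
        | zero =>
          intro R hRX hR
          rw [mulSeq_replicate_succ] at hR
          simp only [List.replicate_zero] at hR
          rw [mulSeq_nil] at hR
          have hRne : R.Nonempty := by
            obtain ⟨W, h1, h2, _⟩ := hR
            obtain ⟨x, hx⟩ := largeStar_nonempty (h1 ⟨0, by omega⟩)
            exact ⟨x, h2 _ hx⟩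
          have hRa : R ∈ MulK θ (LargeStar θ (n + 1)) (a' + 1) := mulK_anti hmA hR
          have hmin : minN X ≤ minN R := minN_mono hRX hRne
          obtain ⟨Y, hYR, hYL, hYhom⟩ := ihn (a' + 1) R f (h3.trans hmin) (ha.trans hmin) hRa
            (fun x hx y hy h => hsp x (hRX hx) y (hRX hy) h) (fun x hx => hf x (hRX hx))
          have hYne : Y.Nonempty := largeStar_nonempty hYL
          exact ⟨f (minN Y), hf _ (hRX (hYR (minN_mem hYne))), Y, hYR, hYL,
            fun z hz => hYhom z hz _ (minN_mem hYne)⟩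
        | succ j ihj =>
          intro R hRX hR
          rw [mulSeq_replicate_succ] at hR
          obtain ⟨S, hSL, hSsub, hSpair⟩ := hR
          choose cf hcf Z hZsub hZmem hZcol using
            fun i => ihj (S i) ((hSsub i).trans hRX) (hSL i)
          obtain ⟨c0, hc0, hcard⟩ := pigeon (m := m) (by omega)
            (by rw [mul_comm]; exact Nat.div_mul_le_self m (a' + 1)) cf hcf
          set T := Finset.univ.filter (fun i => cf i = c0) with hT
          set e := T.orderEmbOfCardLe hcard with he
          have heT : ∀ t : Fin k, e t ∈ T := fun t => Finset.orderEmbOfCardLe_mem T hcard t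
          have hec : ∀ t : Fin k, cf (e t) = c0 := fun t => (Finset.mem_filter.1 (heT t)).2
          refine ⟨c0, hc0, Finset.univ.biUnion (fun t : Fin k => Z (e t)), ?_, ?_, ?_⟩
          · exact Finset.biUnion_subset.2 fun t _ => (hZsub (e t)).trans (hSsub (e t))
          · rw [mulSeq_replicate_succ]
            refine ⟨fun t => Z (e t), fun t => hZmem _,
              fun t => Finset.subset_biUnion_of_mem (fun t : Fin k => Z (e t)) (Finset.mem_univ t), ?_⟩
            intro i j' hij
            have hp := hSpair (e i) (e j') (e.strictMono hij)
            exact ⟨setBelow_mono (hZsub _) (hZsub _) hp.1,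
              thetaApart_mono (hZsub _) (hZsub _)
                (mulSeq_replicate_nonempty hLne hk1 j (hZmem (e j'))) hp.2⟩
          · intro z hz
            obtain ⟨t, _, hzt⟩ := Finset.mem_biUnion.1 hz
            rw [hZcol (e t) z hzt, hec t]
      -- apply to the last block
      have hR0 : Xl.erase m ∈ MulSeq θ (LargeStar θ (n + 1)) (List.replicate (n + 1 + 1) m) := by
        have h := ((largeStar_succ θ (n + 1) Xl).1 (hXwL (Fin.last a'))).2
        rwa [← hm] at h
      obtain ⟨c, hc, Z, hZR, hZmem, hZcol⟩ :=
        key (n + 1) (Xl.erase m) ((Xl.erase_subset m).trans (hXwsub _)) hR0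
      have hZX : Z ⊆ X := hZR.trans ((Xl.erase_subset m).trans (hXwsub _))
      have hZgt : ∀ z ∈ Z, m < z := by
        intro z hz
        have hz' := hZR hz
        exact lt_of_le_of_ne (minN_le (Finset.mem_of_mem_erase hz'))
          (Ne.symm (Finset.ne_of_mem_erase hz'))
      by_cases hy : ∃ y, y ∈ X ∧ y ≤ m ∧ y ≤ k ∧ f y = c
      · obtain ⟨y, hyX, hym, hyk, hyc⟩ := hy
        have hyZ : y ∉ Z := fun h => absurd (hZgt y h) (by omega)
        have hminY : minN (insert y Z) = y :=
          minN_eq_of (Finset.mem_insert_self y Z)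
            (fun w hw => by
              rcases Finset.mem_insert.1 hw with h | h
              · omega
              · have := hZgt w h; omega)
        refine ⟨insert y Z, Finset.insert_subset hyX hZX, ?_, ?_⟩
        · refine (largeStar_succ θ n _).2 ⟨Finset.insert_nonempty _ _, ?_⟩
          rw [hminY, Finset.erase_insert hyZ]
          exact mulSeq_replicate_anti hyk (n + 1) hZmem
        · intro u hu v hv
          have hval : ∀ w ∈ insert y Z, f w = c := by
            intro w hw
            rcases Finset.mem_insert.1 hw with h | h
            · rw [h, hyc]
            · exact hZcol w h
          rw [hval u hu, hval v hv]
      · -- no suitable small element of colour c : drop to a' blocks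
        have hcm : ∀ x ∈ X, x < m → f x ≠ c := by
          intro x hx hxm hfx
          apply hy
          have h4 : 4 ^ x < m := hsp x hx m hmX hxm
          have hax : a' + 1 ≤ x := ha.trans (minN_le hx)
          have hxx : x * (a' + 1) ≤ x * x := Nat.mul_le_mul_left x hax
          have hxk : x ≤ k := by
            rw [hkdef, Nat.le_div_iff_mul_le (by omega)]
            exact hxx.trans ((sq_lt_four_pow x).trans h4).le
          exact ⟨x, hx, by omega, hxk, hfx⟩
        have ha1 : 1 ≤ a' := by
          by_contra hcon
          have ha0 : a' = 0 := by omega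
          apply hy
          refine ⟨m, hmX, le_refl m, ?_, ?_⟩
          · rw [hkdef, ha0]; simp
          · have := hf m hmX; omega
        set X' := Finset.univ.biUnion (fun i : Fin a' => Xw i.castSucc) with hX'
        have hX'X : X' ⊆ X := Finset.biUnion_subset.2 fun i _ => hXwsub _
        have hX'lt : ∀ x ∈ X', x < m := by
          intro x hx
          obtain ⟨i, _, hxi⟩ := Finset.mem_biUnion.1 hx
          exact (hXwpair i.castSucc (Fin.last a') (Fin.castSucc_lt_last i)).1 x hxi m hmXl
        have hX'ne : X'.Nonempty := by
          obtain ⟨x, hx⟩ := largeStar_nonempty (hXwL ((⟨0, by omega⟩ : Fin a').castSucc))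
          exact ⟨x, Finset.mem_biUnion.2 ⟨⟨0, by omega⟩, Finset.mem_univ _, hx⟩⟩
        have hminX' : minN X ≤ minN X' := minN_mono hX'X hX'ne
        have hfc : ∀ x ∈ X', f x ≠ c := fun x hx => hcm x (hX'X hx) (hX'lt x hx)
        obtain ⟨Y, hYX', hYL, hYhom⟩ := iha X' (fun x => if f x < c then f x else f x - 1)
          (h3.trans hminX') (by omega)
          ⟨fun i => Xw i.castSucc, fun i => hXwL _,
            fun i => Finset.subset_biUnion_of_mem (fun i : Fin a' => Xw i.castSucc) (Finset.mem_univ i),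
            fun i j hij => hXwpair _ _ (Fin.castSucc_lt_castSucc_iff.2 hij)⟩
          (fun x hx y hy h => hsp x (hX'X hx) y (hX'X hy) h)
          (fun x hx => by
            have h1 := hf x (hX'X hx)
            have h2 := hfc x hx
            show (if f x < c then f x else f x - 1) < a'
            split <;> omega)
        refine ⟨Y, hYX'.trans hX'X, hYL, ?_⟩
        intro u hu v hv
        have h1 := hfc u (hYX' hu)
        have h2 := hfc v (hYX' hv)
        have h3' : (if f u < c then f u else f u - 1) = (if f v < c then f v else f v - 1) :=
          hYhom u hu v hv
        split_ifs at h3' <;> omega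

/-- pigeonhole principle. -/
theorem stmt_10 (θ : ℕ → ℕ → ℕ → Prop) (n a : ℕ) (X : Finset ℕ)
    (h3 : 3 ≤ minN X) (ha : a ≤ minN X)
    (hX : X ∈ MulK θ (LargeStar θ (n + 1)) a)
    (hsp : ExpSparse X)
    (f : ℕ → ℕ) (hf : ∀ x ∈ X, f x < a) :
    ∃ Y ⊆ X, Y ∈ LargeStar θ n ∧ ∀ x ∈ Y, ∀ y ∈ Y, f x = f y := by
  exact stmt10_aux θ n a X f h3 ha hX hsp hf
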